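/- arXiv:1210.3462 — 3 statements merged into one kernel-verified Lean document; each statement's English description precedes it below -/
import Mathlib

section
/- Define h_m = ((λ_m − 1)/(1 − λ'_m)) · Σ_{i=2}^∞ log(m(i−1)+1)/λ_m^i for integer m ≥ 1, where λ_m = (m+√(m²+4))/2 and λ'_m = (m−√(m²+4))/2. Then h_m → 0 as m → ∞. -/
open Real Filter

private lemma log_le_two_sqrt {x : ℝ} (hx : 1 ≤ x) : Real.log x ≤ 2 * Real.sqrt x := by
  have h0 : (0:ℝ) ≤ x := by linarith
  have h1 : Real.log (Real.sqrt x) = Real.log x / 2 := Real.log_sqrt h0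
  have h2 : Real.log (Real.sqrt x) ≤ Real.sqrt x - 1 :=
    Real.log_le_sub_one_of_pos (Real.sqrt_pos.mpr (by linarith))
  nlinarith [Real.sqrt_nonneg x]

private lemma sqrt_nat_atTop : Tendsto (fun m : ℕ => Real.sqrt m) atTop atTop := by
  apply Filter.tendsto_atTop.2
  intro b
  filter_upwards [Filter.eventually_ge_atTop (⌈b^2⌉₊)] with m hm
  calc b ≤ Real.sqrt (b^2) := by
        rw [Real.sqrt_sq_eq_abs]; exact le_abs_self b
    _ ≤ Real.sqrt m := by
        apply Real.sqrt_le_sqrt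
        calc (b:ℝ)^2 ≤ (⌈b^2⌉₊ : ℝ) := Nat.le_ceil _
          _ ≤ m := by exact_mod_cast hm

set_option maxHeartbeats 1000000 in
theorem entropy_tendsto_zero :
    Filter.Tendsto (fun m : ℕ =>
      ((((m : ℝ) + Real.sqrt (m ^ 2 + 4)) / 2 - 1) /
        (1 - ((m : ℝ) - Real.sqrt (m ^ 2 + 4)) / 2)) *
        ∑' i : ℕ, Real.log (m * (i + 1) + 1) /
          (((m : ℝ) + Real.sqrt (m ^ 2 + 4)) / 2) ^ (i + 2))
      Filter.atTop (nhds 0) := by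
  have h8 : Tendsto (fun m : ℕ => 8 / Real.sqrt m) atTop (nhds 0) :=
    Filter.Tendsto.div_atTop tendsto_const_nhds sqrt_nat_atTop
  refine tendsto_of_tendsto_of_tendsto_of_le_of_le' tendsto_const_nhds h8 ?_ ?_
  all_goals
    filter_upwards [Filter.eventually_ge_atTop 4] with m hm
  all_goals
    set s : ℝ := Real.sqrt ((m:ℝ) ^ 2 + 4) with hs_def
    set L : ℝ := ((m:ℝ) + s) / 2 with hL_def
    have hs0 : 0 ≤ s := Real.sqrt_nonneg _
    have hs2 : s ^ 2 = (m:ℝ)^2 + 4 := Real.sq_sqrt (by positivity)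
    have hm4 : (4:ℝ) ≤ (m:ℝ) := by exact_mod_cast hm
    have hsm : (m:ℝ) ≤ s := by nlinarith
    have hmL : (m:ℝ) ≤ L := by rw [hL_def]; linarith
    have hL4 : (4:ℝ) ≤ L := le_trans hm4 hmL
    clear_value s L
    have hA0 : 0 ≤ (L - 1) / (1 - ((m:ℝ) - s) / 2) := by
      apply div_nonneg <;> linarith
    have hfnn : ∀ i : ℕ, 0 ≤ Real.log ((m:ℝ) * ((i:ℝ) + 1) + 1) / L ^ (i + 2) := by
      intro i
      apply div_nonneg
      · apply Real.log_nonneg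
        have : (0:ℝ) ≤ (m:ℝ) * ((i:ℝ)+1) := by positivity
        linarith
      · positivity
  · -- lower bound 0 ≤ f m
    exact mul_nonneg hA0 (tsum_nonneg hfnn)
  · -- upper bound
    set v : ℝ := Real.sqrt m with hv_def
    set u : ℝ := Real.sqrt ((m:ℝ) + 1) with hu_def
    have hv0 : 0 ≤ v := Real.sqrt_nonneg _
    have hu0 : 0 ≤ u := Real.sqrt_nonneg _
    have hv2 : v ^ 2 = (m:ℝ) := Real.sq_sqrt (by positivity)
    have hvge : 2 ≤ v := by nlinarith [Real.sqrt_nonneg (m:ℝ)]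
    have huv : u ≤ 2 * v := by
      have h1 : u ≤ Real.sqrt (4 * m) := Real.sqrt_le_sqrt (by linarith)
      have h2 : Real.sqrt (4 * m) = 2 * v := by
        rw [Real.sqrt_mul (by norm_num), hv_def,
          show (4:ℝ) = 2^2 by norm_num, Real.sqrt_sq (by norm_num)]
      linarith
    have hu1 : Real.sqrt ((m:ℝ) + 1) = u := rfl
    clear_value u v
    -- geometric comparison series
    have hr0 : (0:ℝ) ≤ 2 / L := by positivity
    have hr1 : 2 / L < 1 := by
      rw [div_lt_one (by linarith)]; linarith
    have hgsum : Summable (fun i : ℕ => (2 * u / L ^ 2) * (2 / L) ^ i) :=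
      (summable_geometric_of_lt_one hr0 hr1).mul_left _
    have hle : ∀ i : ℕ, Real.log ((m:ℝ) * ((i:ℝ) + 1) + 1) / L ^ (i + 2)
        ≤ (2 * u / L ^ 2) * (2 / L) ^ i := by
      intro i
      have hx1 : (1:ℝ) ≤ (m:ℝ) * ((i:ℝ)+1) + 1 := by
        have : (0:ℝ) ≤ (m:ℝ) * ((i:ℝ)+1) := by positivity
        linarith
      have hlog : Real.log ((m:ℝ) * ((i:ℝ)+1) + 1) ≤ 2 * u * 2 ^ i := by
        have h1 : Real.log ((m:ℝ) * ((i:ℝ)+1) + 1)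
            ≤ 2 * Real.sqrt ((m:ℝ) * ((i:ℝ)+1) + 1) := log_le_two_sqrt hx1
        have h2 : Real.sqrt ((m:ℝ) * ((i:ℝ)+1) + 1)
            ≤ Real.sqrt (((m:ℝ)+1) * ((i:ℝ)+1)) := Real.sqrt_le_sqrt (by nlinarith)
        have h3 : Real.sqrt (((m:ℝ)+1) * ((i:ℝ)+1)) = u * Real.sqrt ((i:ℝ)+1) := by
          rw [← hu1, Real.sqrt_mul (by positivity)]
        have h4 : Real.sqrt ((i:ℝ)+1) ≤ (i:ℝ) + 1 := by
          have := Real.sqrt_le_sqrt (show (i:ℝ)+1 ≤ ((i:ℝ)+1)^2 by nlinarith [Nat.cast_nonneg (α := ℝ) i])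
          rwa [Real.sqrt_sq (by positivity)] at this
        have h5' : (i:ℝ) + 1 ≤ (2:ℝ) ^ i := by
          have hnat : i + 1 ≤ 2 ^ i := (Nat.lt_two_pow_self (n := i))
          exact_mod_cast hnat
        nlinarith [Real.sqrt_nonneg ((i:ℝ)+1)]
      have hLpos : (0:ℝ) < L ^ (i + 2) := by positivity
      have hrw : (2 * u / L ^ 2) * (2 / L) ^ i = (2 * u * (2:ℝ) ^ i) / L ^ (i + 2) := by
        rw [div_pow, div_mul_div_comm, pow_add]
        ring
      rw [hrw]
      exact div_le_div_of_nonneg_right hlog hLpos.le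
    have hfsum : Summable (fun i : ℕ => Real.log ((m:ℝ) * ((i:ℝ) + 1) + 1) / L ^ (i + 2)) :=
      Summable.of_nonneg_of_le hfnn hle hgsum
    have htsum_le : (∑' i : ℕ, Real.log ((m:ℝ) * ((i:ℝ) + 1) + 1) / L ^ (i + 2))
        ≤ (2 * u / L ^ 2) * (1 - 2 / L)⁻¹ := by
      calc (∑' i : ℕ, Real.log ((m:ℝ) * ((i:ℝ) + 1) + 1) / L ^ (i + 2))
          ≤ ∑' i : ℕ, (2 * u / L ^ 2) * (2 / L) ^ i := Summable.tsum_le_tsum hle hfsum hgsum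
        _ = (2 * u / L ^ 2) * (1 - 2 / L)⁻¹ := by
            rw [tsum_mul_left, tsum_geometric_of_lt_one hr0 hr1]
    have hA : (L - 1) / (1 - ((m:ℝ) - s) / 2) ≤ L - 1 := by
      apply div_le_self (by linarith)
      linarith
    have htnn : 0 ≤ (∑' i : ℕ, Real.log ((m:ℝ) * ((i:ℝ) + 1) + 1) / L ^ (i + 2)) :=
      tsum_nonneg hfnn
    have hBnn : 0 ≤ (2 * u / L ^ 2) * (1 - 2 / L)⁻¹ := by
      apply mul_nonneg (by positivity)
      rw [inv_nonneg]; linarith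
    have hfinal : (L - 1) * ((2 * u / L ^ 2) * (1 - 2 / L)⁻¹) ≤ 8 / v := by
      have hL0 : L ≠ 0 := by linarith
      have hL2 : L - 2 ≠ 0 := by intro h; linarith
      have heq : (L - 1) * ((2 * u / L ^ 2) * (1 - 2 / L)⁻¹)
          = 2 * u * (L - 1) / (L * (L - 2)) := by
        field_simp
      rw [heq, div_le_div_iff₀ (by nlinarith) (by linarith)]
      nlinarith [mul_nonneg hu0 hv0, mul_nonneg (mul_nonneg hu0 hv0) (show (0:ℝ) ≤ L - 1 by linarith), sq_nonneg (u - 2*v), mul_nonneg hv0 (show (0:ℝ) ≤ L - 4 by linarith)]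
    calc ((L - 1) / (1 - ((m:ℝ) - s) / 2)) *
          (∑' i : ℕ, Real.log ((m:ℝ) * ((i:ℝ) + 1) + 1) / L ^ (i + 2))
        ≤ (L - 1) * ((2 * u / L ^ 2) * (1 - 2 / L)⁻¹) := by
          apply mul_le_mul hA htsum_le htnn (by linarith)
      _ ≤ 8 / v := hfinal
end

section
/- Fix an integer m ≥ 1 and real numbers p_0, p_m ∈ [0,1]. The 4×4 matrix M_{m,2} with rows ((m−1)+p₀p_m, (m−1)+p₀, 1−p₀, 1), (1−p₀p_m, 1−p₀, p₀, 0), (1−p₀p_m, 1, 0, 0), (p₀p_m, 0, 0, 0) has eigenvalues exactly {λ_m, λ'_m, −p₀, p₀p_m}, where λ_m, λ'_m are the roots of x² = mx + 1. -/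
theorem induced_matrix_spectrum (m : ℕ) (hm : 1 ≤ m) (p0 pm : ℝ)
    (hp0 : p0 ∈ Set.Icc (0 : ℝ) 1) (hpm : pm ∈ Set.Icc (0 : ℝ) 1)
    (M : Matrix (Fin 4) (Fin 4) ℝ)
    (hM : M = !![(m - 1 : ℝ) + p0 * pm, (m - 1 : ℝ) + p0, 1 - p0, 1;
                 1 - p0 * pm, 1 - p0, p0, 0;
                 1 - p0 * pm, 1, 0, 0;
                 p0 * pm, 0, 0, 0]) :
    spectrum ℝ M =
      {(m + Real.sqrt (m ^ 2 + 4)) / 2, (m - Real.sqrt (m ^ 2 + 4)) / 2,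
        -p0, p0 * pm} := by
  have hs : Real.sqrt ((m : ℝ) ^ 2 + 4) ^ 2 = (m : ℝ) ^ 2 + 4 :=
    Real.sq_sqrt (by positivity)
  set s := Real.sqrt ((m : ℝ) ^ 2 + 4) with hsdef
  ext x
  rw [spectrum.mem_iff, Matrix.isUnit_iff_isUnit_det, isUnit_iff_ne_zero, not_not]
  have key : (algebraMap ℝ (Matrix (Fin 4) (Fin 4) ℝ) x - M).det
      = (x - (m + s) / 2) * (x - (m - s) / 2) * (x + p0) * (x - p0 * pm) := by
    have hquad : (x - ((m : ℝ) + s) / 2) * (x - ((m : ℝ) - s) / 2)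
        = x ^ 2 - (m : ℝ) * x - 1 := by
      linear_combination (-1/4 : ℝ) * hs
    have hA : algebraMap ℝ (Matrix (Fin 4) (Fin 4) ℝ) x - M =
        !![x - ((m - 1 : ℝ) + p0 * pm), -((m - 1 : ℝ) + p0), -(1 - p0), -1;
           -(1 - p0 * pm), x - (1 - p0), -p0, 0;
           -(1 - p0 * pm), -1, x, 0;
           -(p0 * pm), 0, 0, x] := by
      subst hM
      ext i j
      fin_cases i <;> fin_cases j <;>
        simp [Matrix.algebraMap_matrix_apply, Matrix.vecHead, Matrix.vecTail] <;> ring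
    rw [hA, Matrix.det_succ_row_zero, Fin.sum_univ_four]
    norm_num [Matrix.det_fin_three, Matrix.submatrix_apply, Fin.succAbove, Fin.lt_def,
      show ((3 : Fin 4) : ℕ) = 3 from rfl, show ((2 : Fin 4) : ℕ) = 2 from rfl,
      show ((1 : Fin 4) : ℕ) = 1 from rfl,
      show Fin.castSucc (0 : Fin 3) = (0 : Fin 4) from rfl,
      show Fin.castSucc (1 : Fin 3) = (1 : Fin 4) from rfl,
      show Fin.castSucc (2 : Fin 3) = (2 : Fin 4) from rfl,
      show Fin.succ (0 : Fin 3) = (1 : Fin 4) from rfl,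
      show Fin.succ (1 : Fin 3) = (2 : Fin 4) from rfl,
      show Fin.succ (2 : Fin 3) = (3 : Fin 4) from rfl, Matrix.cons_val_zero, Matrix.cons_val_one,
      Matrix.cons_val_two, Matrix.cons_val_three, Matrix.vecHead, Matrix.vecTail]
    linear_combination (x * p0 * pm * (-1/4) + x * p0 * (1/4) + x ^ 2 * (1/4)
      + p0 ^ 2 * pm * (-1/4)) * hs
  rw [key]
  simp only [Set.mem_insert_iff, Set.mem_singleton_iff, mul_eq_zero, sub_eq_zero,
    add_eq_zero_iff_eq_neg]
  tauto
end

section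
/- For every integer m ≥ 1 and fixed p₀ ∈ (0,1), p_m ∈ (0,1), the 4×4 matrix M_{m,2} (rows ((m−1)+p₀p_m, (m−1)+p₀, 1−p₀, 1), (1−p₀p_m, 1−p₀, p₀, 0), (1−p₀p_m, 1, 0, 0), (p₀p_m, 0, 0, 0)) is primitive, i.e., some power of it has all entries strictly positive. -/
set_option maxHeartbeats 1000000


theorem induced_matrix_primitive (m : ℕ) (hm : 1 ≤ m) (p0 pm : ℝ)
    (hp0 : p0 ∈ Set.Ioo (0 : ℝ) 1) (hpm : pm ∈ Set.Ioo (0 : ℝ) 1)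
    (M : Matrix (Fin 4) (Fin 4) ℝ)
    (hM : M = !![(m - 1 : ℝ) + p0 * pm, (m - 1 : ℝ) + p0, 1 - p0, 1;
                 1 - p0 * pm, 1 - p0, p0, 0;
                 1 - p0 * pm, 1, 0, 0;
                 p0 * pm, 0, 0, 0]) :
    ∃ k : ℕ, 1 ≤ k ∧ ∀ i j, 0 < (M ^ k) i j := by
  obtain ⟨h0, h1⟩ := hp0
  obtain ⟨h2, h3⟩ := hpm
  have hm' : (1 : ℝ) ≤ (m : ℝ) := by exact_mod_cast hm
  refine ⟨2, one_le_two, ?_⟩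
  intro i j
  rw [pow_two, hM]
  rw [Matrix.mul_apply]
  fin_cases i <;> fin_cases j <;>
    simp [Fin.sum_univ_four, Matrix.vecHead, Matrix.vecTail] <;> nlinarith [mul_pos h0 h2, mul_pos (mul_pos h0 h2) h0,
      mul_pos h0 (sub_pos.mpr h3), mul_pos (mul_pos h0 h2) (sub_pos.mpr h1),
      mul_pos (sub_pos.mpr h1) (sub_pos.mpr h3)]
end
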